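/- Let k ≥ 3 and let G be a connected graph of treedepth k. Then every unmarked vertex, under Alice's ancestor-marking strategy in the marking game on G, has at most 2k-4 marked neighbors at every point in the game; consequently the (connected) game coloring number of G is at most 2k-3. -/

import Mathlib

/-- A rooted tree on vertex set `V`, given by a parent function together with a
depth function certifying acyclicity.  The root is the unique vertex of depth `0`. -/
structure RTree (V : Type*) where
  parent : V → V
  root : V
  depth : V → ℕ
  depth_root : depth root = 0
  depth_parent : ∀ v, v ≠ root → depth (parent v) + 1 = depth v
  parent_root : parent root = root

namespace RTree

variable {V : Type*} (T : RTree V)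

/-- `u` is a strict ancestor of `v` in `T`. -/
def IsStrictAncestor (u v : V) : Prop :=
  u ≠ v ∧ ∃ n : ℕ, T.parent^[n] v = u

/-- The closure of a rooted tree: `u ~ v` iff one is a strict ancestor of the other. -/
def closure : SimpleGraph V where
  Adj u v := T.IsStrictAncestor u v ∨ T.IsStrictAncestor v u
  symm := ⟨by intro u v h; tauto⟩
  loopless := ⟨by rintro v (⟨h, -⟩ | ⟨h, -⟩) <;> exact h rfl⟩

/-- `T` has height at most `k`: every root-to-leaf path has at most `k` vertices. -/
def HeightLE (k : ℕ) : Prop := ∀ v, T.depth v < k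

/-- `v` is a leaf of `T` (it has no children). -/
def IsLeaf (v : V) : Prop := ∀ u, T.parent u = v → u = v

end RTree

/-- A graph `G` has treedepth at most `k` if it embeds into the closure of a rooted
tree of height at most `k` (whose vertex set may be larger than that of `G`). -/
def TreedepthLE {W : Type} (G : SimpleGraph W) (k : ℕ) : Prop :=
  ∃ (V : Type) (T : RTree V) (f : W ↪ V),
    T.HeightLE k ∧ ∀ a b, G.Adj a b → T.closure.Adj (f a) (f b)

section Strategy

variable {V : Type} (G : SimpleGraph V) (T : RTree V)

/-- A vertex is available at a state `L` if it is unmarked and adjacent to a marked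
vertex. -/
def Available (L : List V) (u : V) : Prop := u ∉ L ∧ ∃ w ∈ L, G.Adj w u

/-- Alice's ancestor-marking strategy: in the state `L` in which Bob has just marked `b`,
Alice may answer with `a` iff either `a` is an unmarked available ancestor of `b` of least
level, or no unmarked available ancestor of `b` exists and `a` is an available vertex of
least level. -/
def AliceMoveOK (L : List V) (b a : V) : Prop :=
  (T.IsStrictAncestor a b ∧ Available G L a ∧
    ∀ u, T.IsStrictAncestor u b → Available G L u → T.depth a ≤ T.depth u) ∨
  ((∀ u, T.IsStrictAncestor u b → ¬ Available G L u) ∧ Available G L a ∧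
    ∀ u, Available G L u → T.depth a ≤ T.depth u)

/-- The chronological list `L` of marked vertices (earliest first) is a play of the
marking game in which no vertex is marked twice, Alice (who moves at even positions,
starting the game) first marks the root, and afterwards always follows the
ancestor-marking strategy.  Bob (who moves at odd positions) may mark any unmarked
vertex. -/
def FollowsStrategy (L : List V) : Prop :=
  L.Nodup ∧
  (∀ h : 0 < L.length, L.get ⟨0, h⟩ = T.root) ∧
  ∀ i : ℕ, 1 ≤ i → ∀ h : 2 * i < L.length,
    AliceMoveOK G T (L.take (2 * i)) (L.get ⟨2 * i - 1, by omega⟩) (L.get ⟨2 * i, h⟩)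

open Classical in
/-- The number of marked strict ancestors of `v` at the state `L`. -/
noncomputable def markedAncestors (L : List V) (v : V) : ℕ :=
  L.countP fun u => decide (T.IsStrictAncestor u v)

open Classical in
/-- The number of descendant-neighbours of `v` that were marked by Bob at the state `L`
(Bob's moves are the ones at odd chronological positions). -/
noncomputable def bobDescCount (L : List V) (v : V) : ℕ :=
  ((L.zipIdx.filter fun p => decide (p.2 % 2 = 1)).map Prod.fst).countP
    fun u => decide (G.Adj v u ∧ T.IsStrictAncestor v u)

end Strategy

section MarkingGame

variable {V : Type} [Fintype V] [DecidableEq V] (G : SimpleGraph V) [DecidableRel G.Adj]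

/-- A legal move in the connected marking game from the state `S` (most recent move
first): the vertex is unmarked, and (except for the very first move) is adjacent to a
marked vertex, so that the marked set stays connected. -/
def ConnLegalMove (S : List V) (v : V) : Prop :=
  v ∉ S ∧ (S = [] ∨ ∃ u ∈ S, G.Adj u v)

/-- The number of neighbours of `v` marked strictly before `v` in the chronological
marking order `L`. -/
def backDegree (L : List V) (v : V) : ℕ :=
  (L.takeWhile fun u => decide (u ≠ v)).countP fun u => decide (G.Adj v u)

/-- The score of a completed play with chronological marking order `L`: the maximum over
all vertices `v` of one plus the number of neighbours of `v` marked strictly before `v`. -/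
def markScore (L : List V) : ℕ :=
  Finset.univ.sup fun v => backDegree G L v + 1

/-- Alice can guarantee a final score of at most `m` in the connected marking game
starting from the state `S` (most recent move first; Alice moves when an even number of
vertices has been marked). -/
def AliceWinsFrom (m : ℕ) (S : List V) : Prop :=
  if _h : S.length < Fintype.card V then
    if Even S.length then ∃ v, ConnLegalMove G S v ∧ AliceWinsFrom m (v :: S)
    else ∀ v, ConnLegalMove G S v → AliceWinsFrom m (v :: S)
  else markScore G S.reverse ≤ m
termination_by Fintype.card V - S.length
decreasing_by all_goals simp; omega

/-- The connected game coloring number of `G`: the least `m` such that Alice can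
guarantee that, in the connected marking game on `G`, every vertex has at most `m - 1`
neighbours marked strictly before it. -/
noncomputable def connGameColNumber : ℕ := sInf {m | AliceWinsFrom G m []}

/-- A graph is `d`-degenerate if every nonempty (induced) subgraph has a vertex of degree
at most `d`. -/
def Degenerate (d : ℕ) : Prop :=
  ∀ s : Finset V, s.Nonempty → ∃ v ∈ s, (s.filter fun u => G.Adj v u).card ≤ d

/-- The coloring number of `G`: one more than the degeneracy of `G`. -/
noncomputable def colNumber : ℕ := sInf {d | Degenerate G d} + 1

end MarkingGame

/-! ### Auxiliary lemmas -/

namespace RTree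
variable {V : Type*} (T : RTree V)

lemma iterate_parent_root (n : ℕ) : T.parent^[n] T.root = T.root := by
  induction n with
  | zero => rfl
  | succ n ih => rw [Function.iterate_succ_apply, T.parent_root, ih]

lemma parent_iterate_depth (v : V) : T.parent^[T.depth v] v = T.root := by
  generalize hd : T.depth v = d
  induction d generalizing v with
  | zero =>
    by_contra h
    have hne : v ≠ T.root := by simpa using h
    have := T.depth_parent v hne
    omega
  | succ d ih =>
    by_cases h : v = T.root
    · subst h; rw [T.depth_root] at hd; omega
    · have hp := T.depth_parent v h
      rw [Function.iterate_succ_apply]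
      exact ih (T.parent v) (by omega)

lemma depth_eq_zero {v : V} (h : T.depth v = 0) : v = T.root := by
  have := parent_iterate_depth T v
  rwa [h] at this

lemma iterate_cases (n : ℕ) (v : V) :
    T.parent^[n] v = T.root ∨ T.depth (T.parent^[n] v) + n = T.depth v := by
  induction n generalizing v with
  | zero => right; simp
  | succ n ih =>
    by_cases h : v = T.root
    · left; subst h; exact iterate_parent_root T _
    · rcases ih (T.parent v) with h1 | h1
      · left; rw [Function.iterate_succ_apply]; exact h1
      · right; rw [Function.iterate_succ_apply]
        have := T.depth_parent v h; omega

lemma anc_spec {u v : V} (h : T.IsStrictAncestor u v) :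
    T.depth u < T.depth v ∧ T.parent^[T.depth v - T.depth u] v = u := by
  obtain ⟨hne, n, hn⟩ := h
  rcases iterate_cases T n v with hr | hr
  · rw [hn] at hr
    subst hr
    have hv : v ≠ T.root := by
      rintro rfl
      rw [iterate_parent_root] at hn
      exact hne hn.symm
    have h1 : T.depth v ≠ 0 := fun h0 => hv (depth_eq_zero T h0)
    refine ⟨by rw [T.depth_root]; omega, ?_⟩
    rw [T.depth_root, Nat.sub_zero]
    exact parent_iterate_depth T v
  · rw [hn] at hr
    have hn0 : n ≠ 0 := by rintro rfl; exact hne (by simpa using hn.symm)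
    refine ⟨by omega, ?_⟩
    have : T.depth v - T.depth u = n := by omega
    rw [this]; exact hn

lemma anc_depth_lt {u v : V} (h : T.IsStrictAncestor u v) : T.depth u < T.depth v :=
  (anc_spec T h).1

lemma anc_unique {u w v : V} (hu : T.IsStrictAncestor u v) (hw : T.IsStrictAncestor w v)
    (h : T.depth u = T.depth w) : u = w := by
  have h1 := (anc_spec T hu).2
  have h2 := (anc_spec T hw).2
  rw [← h1, ← h2, h]

lemma anc_trans {u w b : V} (h1 : T.IsStrictAncestor u w) (h2 : T.IsStrictAncestor w b) :
    T.IsStrictAncestor u b := by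
  have hd1 := anc_depth_lt T h1
  have hd2 := anc_depth_lt T h2
  obtain ⟨-, n, hn⟩ := h1
  obtain ⟨-, m, hm⟩ := h2
  refine ⟨fun h => by subst h; omega, n + m, ?_⟩
  rw [Function.iterate_add_apply, hm, hn]

lemma anc_comparable {u w v : V} (hu : T.IsStrictAncestor u v) (hw : T.IsStrictAncestor w v)
    (h : T.depth u < T.depth w) : T.IsStrictAncestor u w := by
  have h1 := (anc_spec T hu).2
  have h2 := (anc_spec T hw).2
  have hwv := anc_depth_lt T hw
  refine ⟨fun he => by subst he; omega, T.depth w - T.depth u, ?_⟩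
  have heq : T.depth w - T.depth u + (T.depth v - T.depth w) = T.depth v - T.depth u := by omega
  calc T.parent^[T.depth w - T.depth u] w
      = T.parent^[T.depth w - T.depth u] (T.parent^[T.depth v - T.depth w] v) := by rw [h2]
    _ = T.parent^[T.depth w - T.depth u + (T.depth v - T.depth w)] v := by
        rw [Function.iterate_add_apply]
    _ = u := by rw [heq, h1]

lemma root_anc {v : V} (h : v ≠ T.root) : T.IsStrictAncestor T.root v :=
  ⟨Ne.symm h, T.depth v, parent_iterate_depth T v⟩

end RTree

section CountAux
variable {V : Type} [DecidableEq V]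

lemma countP_eq_card_filter (L : List V) (p : V → Prop) [DecidablePred p] :
    L.countP (fun u => decide (p u)) =
      (Finset.univ.filter (fun i : Fin L.length => p (L.get i))).card := by
  conv_lhs => rw [← List.map_get_finRange L]
  rw [List.countP_map, List.countP_eq_length_filter]
  rw [← List.toFinset_card_of_nodup ((List.nodup_finRange _).filter _)]
  rw [List.toFinset_filter, List.toFinset_finRange]
  congr 1
  ext i
  simp [Function.comp]

lemma countP_le_add (L : List V) (p q r : V → Bool)
    (h : ∀ a ∈ L, p a → q a = true ∨ r a = true) :
    L.countP p ≤ L.countP q + L.countP r := by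
  induction L with
  | nil => simp
  | cons a l ih =>
    have ha := h a List.mem_cons_self
    have ihl := ih (fun x hx => h x (List.mem_cons_of_mem _ hx))
    simp only [List.countP_cons]
    rcases hp : p a with _ | _
    · simp; omega
    · rcases ha hp with hq | hr
      · simp [hq]; omega
      · simp [hr]; omega

lemma anc_count_le (T : RTree V) (L : List V) (hL : L.Nodup) (v : V) (c : ℕ)
    (p : V → Prop) [DecidablePred p]
    (hp : ∀ u ∈ L, p u → T.IsStrictAncestor u v ∧ c ≤ T.depth u) :
    L.countP (fun u => decide (p u)) ≤ T.depth v - c := by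
  rw [List.countP_eq_length_filter, ← List.toFinset_card_of_nodup (hL.filter _)]
  have hcard : ((L.filter (fun u => decide (p u))).toFinset).card ≤
      (Finset.Ico c (T.depth v)).card := by
    apply Finset.card_le_card_of_injOn T.depth
    · intro a ha
      rw [Finset.mem_coe, List.mem_toFinset, List.mem_filter, decide_eq_true_eq] at ha
      have h := hp a ha.1 ha.2
      exact Finset.mem_Ico.mpr ⟨h.2, RTree.anc_depth_lt T h.1⟩
    · intro a ha b hb hd
      rw [Finset.mem_coe, List.mem_toFinset, List.mem_filter, decide_eq_true_eq] at ha hb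
      exact RTree.anc_unique T (hp a ha.1 ha.2).1 (hp b hb.1 hb.2).1 hd
  simpa [Nat.card_Ico] using hcard

end CountAux


section Part1

variable {V : Type} [DecidableEq V]

lemma get_mem_take (L : List V) (m i : ℕ) (h : i < L.length) (him : i < m) :
    L.get ⟨i, h⟩ ∈ L.take m := by
  have h2 : i < (L.take m).length := by simp [List.length_take]; omega
  have h3 : (L.take m)[i]'h2 = L[i]'h := List.getElem_take ..
  rw [List.get_eq_getElem, ← h3]
  exact List.getElem_mem h2

open Classical in
lemma part1_bound (G : SimpleGraph V) [DecidableRel G.Adj] (T : RTree V) (k : ℕ)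
    (hk : 3 ≤ k) (hheight : T.HeightLE k) (hG : G ≤ T.closure) :
    ∀ L : List V, FollowsStrategy G T L →
      ∀ v : V, v ∉ L → (L.countP fun u => decide (G.Adj v u)) ≤ 2 * k - 4 := by
  intro L hF v hv
  by_cases hL0 : L = []
  · subst hL0; simp
  have hn : 0 < L.length := List.length_pos_iff.mpr hL0
  obtain ⟨hNd, hRoot, hMove⟩ := hF
  have hroot : L.get ⟨0, hn⟩ = T.root := hRoot hn
  have hrootmem : T.root ∈ L := by rw [← hroot]; exact L.get_mem ⟨0, hn⟩
  have hvr : v ≠ T.root := fun h => hv (h ▸ hrootmem)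
  have ht1 : 1 ≤ T.depth v := by
    rcases Nat.eq_zero_or_pos (T.depth v) with h | h
    · exact absurd (RTree.depth_eq_zero T h) hvr
    · exact h
  have hsplit : (L.countP fun u => decide (G.Adj v u)) ≤
      (L.countP fun u => decide (G.Adj v u ∧ T.IsStrictAncestor u v)) +
      (L.countP fun u => decide (G.Adj v u ∧ T.IsStrictAncestor v u)) := by
    apply countP_le_add
    intro a _ hpa
    simp only [decide_eq_true_eq] at hpa ⊢
    rcases hG hpa with h | h
    · right; exact ⟨hpa, h⟩
    · left; exact ⟨hpa, h⟩
  have hanc : (L.countP fun u => decide (G.Adj v u ∧ T.IsStrictAncestor u v)) ≤ T.depth v := by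
    have := anc_count_le T L hNd v 0 (fun u => G.Adj v u ∧ T.IsStrictAncestor u v)
      (fun u _ hu => ⟨hu.2, Nat.zero_le _⟩)
    simpa using this
  rcases le_or_gt (k - 1) (T.depth v) with hcase | hcase
  · -- v at the deepest level: no descendants
    have hdesc0 : (L.countP fun u => decide (G.Adj v u ∧ T.IsStrictAncestor v u)) = 0 := by
      rw [List.countP_eq_zero]
      intro a _
      simp only [decide_eq_true_eq, not_and]
      intro _ hanc
      have h1 := RTree.anc_depth_lt T hanc
      have h2 := hheight a
      omega
    have hhv := hheight v
    omega
  -- main case : depth v ≤ k - 2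
  have hdesc_eq : (L.countP fun u => decide (G.Adj v u ∧ T.IsStrictAncestor v u)) =
      (Finset.univ.filter
        (fun i : Fin L.length => G.Adj v (L.get i) ∧ T.IsStrictAncestor v (L.get i))).card :=
    countP_eq_card_filter L _
  set n := L.length with hns
  set JD := Finset.univ.filter
      (fun i : Fin n => G.Adj v (L.get i) ∧ T.IsStrictAncestor v (L.get i)) with hJD
  set JA := JD.filter (fun j => j.val % 2 = 0) with hJA
  set JB := JD.filter (fun j => j.val % 2 = 1 ∧ j.val + 1 < n) with hJB
  set JU := JD.filter (fun j => j.val % 2 = 1 ∧ j.val + 1 = n) with hJU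
  have hDmem : ∀ j ∈ JD, G.Adj v (L.get j) ∧ T.IsStrictAncestor v (L.get j) := by
    intro j hj; rw [hJD, Finset.mem_filter] at hj; exact hj.2
  have hsub : JD ⊆ JA ∪ JB ∪ JU := by
    intro j hj
    simp only [hJA, hJB, hJU, Finset.mem_union, Finset.mem_filter]
    have hjlt := j.isLt
    have h2 := Nat.mod_two_eq_zero_or_one j.val
    rcases h2 with h2 | h2
    · exact Or.inl (Or.inl ⟨hj, h2⟩)
    · rcases Nat.lt_or_ge (j.val + 1) n with h3 | h3
      · exact Or.inl (Or.inr ⟨hj, h2, h3⟩)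
      · exact Or.inr ⟨hj, h2, by omega⟩
  have hvnotin : ∀ m, v ∉ L.take m := fun m hm => hv (List.mem_of_mem_take hm)
  have hgetne : ∀ i : Fin n, L.get i ≠ v := fun i h => hv (h ▸ L.get_mem i)
  have hJD0 : ∀ j ∈ JD, j.val ≠ 0 := by
    intro j hj h0
    have hanc := (hDmem j hj).2
    have hjr : L.get j = T.root := by
      rw [show j = ⟨0, hn⟩ from Fin.ext h0]; exact hroot
    have h1 := RTree.anc_depth_lt T hanc
    rw [hjr, T.depth_root] at h1
    omega
  have hAlice : ∀ j ∈ JA, ∀ w ∈ L.take j.val, ¬ G.Adj w v := by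
    intro j hj w hw hadj
    rw [hJA, Finset.mem_filter] at hj
    obtain ⟨hjD, hpar⟩ := hj
    obtain ⟨hadjj, hancj⟩ := hDmem j hjD
    have hj0 : j.val ≠ 0 := hJD0 j hjD
    have hji : 1 ≤ j.val / 2 := by omega
    have hlt : 2 * (j.val / 2) < n := by have := j.isLt; omega
    have h2i : 2 * (j.val / 2) = j.val := by omega
    have hmv := hMove (j.val / 2) hji hlt
    have hget2i : L.get ⟨2 * (j.val / 2), hlt⟩ = L.get j := by congr 1; exact Fin.ext h2i
    have hav : Available G (L.take (2 * (j.val / 2))) v :=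
      ⟨hvnotin _, w, by rw [h2i]; exact hw, hadj⟩
    have h5 := RTree.anc_depth_lt T hancj
    rcases hmv with ⟨h1, -, h3⟩ | ⟨-, -, h3⟩
    · have hvb : T.IsStrictAncestor v (L.get ⟨2 * (j.val / 2) - 1, by omega⟩) :=
        RTree.anc_trans T (hget2i ▸ hancj) h1
      have hle := h3 v hvb hav
      rw [hget2i] at hle
      omega
    · have hle := h3 v hav
      rw [hget2i] at hle
      omega
  have hcardA : JA.card ≤ 1 := by
    rw [Finset.card_le_one]
    intro a ha b hb
    have key : ∀ x y : Fin n, x ∈ JA → y ∈ JA → x.val < y.val → False := by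
      intro x y hx hy hxy
      have hmem : L.get x ∈ L.take y.val := get_mem_take L y.val x.val x.isLt hxy
      have hadj : G.Adj (L.get x) v := by
        rw [hJA, Finset.mem_filter] at hx
        exact ((hDmem x hx.1).1).symm
      exact hAlice y hy _ hmem hadj
    rcases lt_trichotomy a.val b.val with h | h | h
    · exact absurd (key a b ha hb h) (fun h => h)
    · exact Fin.ext h
    · exact absurd (key b a hb ha h) (fun h => h)
  have hrootadj : JA.Nonempty → ¬ G.Adj v T.root := by
    rintro ⟨j, hj⟩ hadj
    have hjD : j ∈ JD := by rw [hJA, Finset.mem_filter] at hj; exact hj.1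
    have hj0 : j.val ≠ 0 := hJD0 j hjD
    have hmem : T.root ∈ L.take j.val := by
      rw [← hroot]; exact get_mem_take L j.val 0 hn (by omega)
    exact hAlice j hj _ hmem hadj.symm
  have hBB : ∀ j ∈ JB, ∀ hh : j.val + 1 < n,
      T.IsStrictAncestor (L.get ⟨j.val + 1, hh⟩) v ∧ 1 ≤ T.depth (L.get ⟨j.val + 1, hh⟩) := by
    intro j hj hh
    rw [hJB, Finset.mem_filter] at hj
    obtain ⟨hjD, hodd, -⟩ := hj
    obtain ⟨hadjj, hancj⟩ := hDmem j hjD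
    have hi1 : 1 ≤ (j.val + 1) / 2 := by omega
    have h2i : 2 * ((j.val + 1) / 2) = j.val + 1 := by omega
    have hlt : 2 * ((j.val + 1) / 2) < n := by omega
    have hmv := hMove ((j.val + 1) / 2) hi1 hlt
    have hgetb : L.get ⟨2 * ((j.val + 1) / 2) - 1, by omega⟩ = L.get j := by
      congr 1; exact Fin.ext (by simp; omega)
    have hgeta : L.get ⟨2 * ((j.val + 1) / 2), hlt⟩ = L.get ⟨j.val + 1, hh⟩ := by
      congr 1; exact Fin.ext (by simp; omega)
    have hav : Available G (L.take (2 * ((j.val + 1) / 2))) v := by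
      refine ⟨hvnotin _, L.get j, ?_, hadjj.symm⟩
      exact get_mem_take L _ j.val j.isLt (by omega)
    rw [hgetb, hgeta] at hmv
    rcases hmv with ⟨h1, h2, h3⟩ | ⟨h1, -, -⟩
    · have hdle : T.depth (L.get ⟨j.val + 1, hh⟩) ≤ T.depth v := h3 v hancj hav
      have hne : L.get ⟨j.val + 1, hh⟩ ≠ v := hgetne _
      have hdlt : T.depth (L.get ⟨j.val + 1, hh⟩) < T.depth v :=
        lt_of_le_of_ne hdle (fun he => hne (RTree.anc_unique T h1 hancj he))
      refine ⟨RTree.anc_comparable T h1 hancj hdlt, ?_⟩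
      have hrm : T.root ∈ L.take (2 * ((j.val + 1) / 2)) := by
        rw [← hroot]; exact get_mem_take L _ 0 hn (by omega)
      have hner : L.get ⟨j.val + 1, hh⟩ ≠ T.root := fun he => h2.1 (he ▸ hrm)
      have : T.depth (L.get ⟨j.val + 1, hh⟩) ≠ 0 :=
        fun h0 => hner (RTree.depth_eq_zero T h0)
      omega
    · exact absurd hav (h1 v hancj)
  have hcardB : JB.card ≤ T.depth v - 1 := by
    have hinj := Finset.card_le_card_of_injOn
      (f := fun j : Fin n => T.depth (L.getD (j.val + 1) T.root))
      (s := JB) (t := Finset.Ico 1 (T.depth v)) ?_ ?_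
    · simpa [Nat.card_Ico] using hinj
    · intro j hj
      have hh : j.val + 1 < n := by rw [Finset.mem_coe, hJB, Finset.mem_filter] at hj; exact hj.2.2
      have hgd : L.getD (j.val + 1) T.root = L.get ⟨j.val + 1, hh⟩ := by
        rw [List.getD_eq_getElem L T.root hh]; rfl
      show T.depth (L.getD (j.val + 1) T.root) ∈ Finset.Ico 1 (T.depth v)
      rw [hgd]
      obtain ⟨h1, h2⟩ := hBB j hj hh
      exact Finset.mem_Ico.mpr ⟨h2, RTree.anc_depth_lt T h1⟩
    · intro a ha b hb he
      rw [Finset.mem_coe] at ha hb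
      have hha : a.val + 1 < n := by rw [hJB, Finset.mem_filter] at ha; exact ha.2.2
      have hhb : b.val + 1 < n := by rw [hJB, Finset.mem_filter] at hb; exact hb.2.2
      have hgda : L.getD (a.val + 1) T.root = L.get ⟨a.val + 1, hha⟩ := by
        rw [List.getD_eq_getElem L T.root hha]; rfl
      have hgdb : L.getD (b.val + 1) T.root = L.get ⟨b.val + 1, hhb⟩ := by
        rw [List.getD_eq_getElem L T.root hhb]; rfl
      have he' : T.depth (L.get ⟨a.val + 1, hha⟩) = T.depth (L.get ⟨b.val + 1, hhb⟩) := by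
        rw [← hgda, ← hgdb]; exact he
      have h1 := (hBB a ha hha).1
      have h2 := (hBB b hb hhb).1
      have heq : L.get ⟨a.val + 1, hha⟩ = L.get ⟨b.val + 1, hhb⟩ :=
        RTree.anc_unique T h1 h2 he'
      simp only [List.get_eq_getElem] at heq
      have := (hNd.getElem_inj_iff).mp heq
      exact Fin.ext (by omega)
  have hcardU : JU.card ≤ 1 := by
    rw [Finset.card_le_one]
    intro a ha b hb
    rw [hJU, Finset.mem_filter] at ha hb
    have h1 := ha.2
    have h2 := hb.2
    exact Fin.ext (by omega)
  have hcardD : JD.card ≤ JA.card + JB.card + JU.card := by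
    calc JD.card ≤ (JA ∪ JB ∪ JU).card := Finset.card_le_card hsub
      _ ≤ (JA ∪ JB).card + JU.card := Finset.card_union_le _ _
      _ ≤ JA.card + JB.card + JU.card := by
          have := Finset.card_union_le JA JB; omega
  rcases JA.eq_empty_or_nonempty with hAe | hAne
  · have hcA : JA.card = 0 := by rw [hAe]; rfl
    omega
  · have hanc2 : (L.countP fun u => decide (G.Adj v u ∧ T.IsStrictAncestor u v)) ≤
        T.depth v - 1 := by
      apply anc_count_le T L hNd v 1
      intro u _ hu
      refine ⟨hu.2, ?_⟩
      have hur : u ≠ T.root := fun he => hrootadj hAne (he ▸ hu.1)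
      have : T.depth u ≠ 0 := fun h0 => hur (RTree.depth_eq_zero T h0)
      omega
    omega

end Part1


section Part2

variable {V : Type} [Fintype V] [DecidableEq V]

lemma exists_boundary (G : SimpleGraph V) (s : Set V) :
    ∀ {w u : V}, G.Walk w u → w ∈ s → u ∉ s → ∃ a b, a ∈ s ∧ b ∉ s ∧ G.Adj a b := by
  intro w u p
  induction p with
  | nil => intro hw hu; exact absurd hw hu
  | @cons x y z h p ih =>
    intro hw hu
    by_cases hy : y ∈ s
    · exact ih hy hu
    · exact ⟨x, y, hw, hy, h⟩

lemma exists_avail (G : SimpleGraph V) (hconn : G.Connected) (L : List V) (hL : L ≠ [])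
    (hcard : L.length < Fintype.card V) (hNd : L.Nodup) : ∃ u, Available G L u := by
  classical
  obtain ⟨u, hu⟩ : ∃ u, u ∉ L := by
    by_contra h
    push_neg at h
    have hsub : Finset.univ ⊆ L.toFinset := fun x _ => List.mem_toFinset.mpr (h x)
    have := Finset.card_le_card hsub
    rw [List.toFinset_card_of_nodup hNd, Finset.card_univ] at this
    omega
  obtain ⟨w, hw⟩ := List.exists_mem_of_ne_nil L hL
  obtain ⟨p⟩ := hconn.preconnected w u
  obtain ⟨a, b, ha, hb, hab⟩ := exists_boundary G {x | x ∈ L} p hw hu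
  exact ⟨b, hb, a, ha, hab⟩

open Classical in
lemma alice_choice (G : SimpleGraph V) (T : RTree V) (L : List V) (b : V)
    (hav : ∃ u, Available G L u) : ∃ a, AliceMoveOK G T L b a := by
  by_cases h : ∃ u, T.IsStrictAncestor u b ∧ Available G L u
  · obtain ⟨u0, hu0⟩ := h
    have hne : (Finset.univ.filter
        (fun u => T.IsStrictAncestor u b ∧ Available G L u)).Nonempty :=
      ⟨u0, Finset.mem_filter.mpr ⟨Finset.mem_univ _, hu0⟩⟩
    obtain ⟨a, has, hmin⟩ := Finset.exists_min_image _ T.depth hne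
    rw [Finset.mem_filter] at has
    refine ⟨a, Or.inl ⟨has.2.1, has.2.2, ?_⟩⟩
    intro u hu1 hu2
    exact hmin u (Finset.mem_filter.mpr ⟨Finset.mem_univ _, hu1, hu2⟩)
  · push_neg at h
    obtain ⟨u0, hu0⟩ := hav
    have hne : (Finset.univ.filter (fun u => Available G L u)).Nonempty :=
      ⟨u0, Finset.mem_filter.mpr ⟨Finset.mem_univ _, hu0⟩⟩
    obtain ⟨a, has, hmin⟩ := Finset.exists_min_image _ T.depth hne
    rw [Finset.mem_filter] at has
    refine ⟨a, Or.inr ⟨h, has.2, ?_⟩⟩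
    intro u hu
    exact hmin u (Finset.mem_filter.mpr ⟨Finset.mem_univ _, hu⟩)

lemma follows_prefix (G : SimpleGraph V) (T : RTree V) {M L : List V} (h : M <+: L)
    (hF : FollowsStrategy G T L) : FollowsStrategy G T M := by
  obtain ⟨r, rfl⟩ := h
  obtain ⟨hNd, hRoot, hMove⟩ := hF
  refine ⟨List.Nodup.sublist (List.sublist_append_left M r) hNd, ?_, ?_⟩
  · intro h0
    have h0' : 0 < (M ++ r).length := by simp; omega
    have hr := hRoot h0'
    rw [← hr]
    simp only [List.get_eq_getElem]
    exact (List.getElem_append_left h0).symm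
  · intro i hi h2
    have h2' : 2 * i < (M ++ r).length := by simp; omega
    have hmv := hMove i hi h2'
    have ht : (M ++ r).take (2 * i) = M.take (2 * i) :=
      List.take_append_of_le_length (by omega)
    have e1 : (M ++ r).get ⟨2 * i - 1, by simp; omega⟩ = M.get ⟨2 * i - 1, by omega⟩ := by
      simp only [List.get_eq_getElem]
      exact List.getElem_append_left (by omega)
    have e2 : (M ++ r).get ⟨2 * i, h2'⟩ = M.get ⟨2 * i, h2⟩ := by
      simp only [List.get_eq_getElem]
      exact List.getElem_append_left h2
    rw [ht, e1, e2] at hmv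
    exact hmv

lemma aliceMoveOK_congr (G : SimpleGraph V) (T : RTree V) {L L' : List V} {b b' a a' : V}
    (h1 : L = L') (h2 : b = b') (h3 : a = a') (h : AliceMoveOK G T L b a) :
    AliceMoveOK G T L' b' a' := by
  subst h1; subst h2; subst h3; exact h

lemma follows_append_bob (G : SimpleGraph V) (T : RTree V) {L : List V} {v : V}
    (hF : FollowsStrategy G T L) (hodd : Odd L.length) (hv : v ∉ L) :
    FollowsStrategy G T (L ++ [v]) := by
  obtain ⟨hNd, hRoot, hMove⟩ := hF
  have hL0 : 0 < L.length := by rcases hodd with ⟨c, hc⟩; omega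
  refine ⟨?_, ?_, ?_⟩
  · simp [List.nodup_append, hNd, hv]; rintro b hb rfl; exact hv hb
  · intro h0
    simp only [List.get_eq_getElem]
    rw [List.getElem_append_left hL0]
    have := hRoot hL0
    simpa using this
  · intro i hi h2
    have h2i : 2 * i < L.length := by
      have : (L ++ [v]).length = L.length + 1 := by simp
      rcases hodd with ⟨c, hc⟩
      omega
    have hmv := hMove i hi h2i
    have ht : (L ++ [v]).take (2 * i) = L.take (2 * i) :=
      List.take_append_of_le_length (by omega)
    have e1 : (L ++ [v]).get ⟨2 * i - 1, by simp; omega⟩ = L.get ⟨2 * i - 1, by omega⟩ := by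
      simp only [List.get_eq_getElem]
      exact List.getElem_append_left (by omega)
    have e2 : (L ++ [v]).get ⟨2 * i, by simp; omega⟩ = L.get ⟨2 * i, h2i⟩ := by
      simp only [List.get_eq_getElem]
      exact List.getElem_append_left h2i
    exact aliceMoveOK_congr G T ht.symm e1.symm e2.symm hmv

lemma follows_append_alice (G : SimpleGraph V) (T : RTree V) {L : List V} {a : V}
    (hF : FollowsStrategy G T L) (heven : Even L.length) (hL0 : L ≠ [])
    (hok : AliceMoveOK G T L (L.getLast hL0) a) (ha : a ∉ L) :
    FollowsStrategy G T (L ++ [a]) := by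
  obtain ⟨hNd, hRoot, hMove⟩ := hF
  have hL0' : 0 < L.length := List.length_pos_iff.mpr hL0
  refine ⟨?_, ?_, ?_⟩
  · simp [List.nodup_append, hNd, ha]; rintro b hb rfl; exact ha hb
  · intro h0
    simp only [List.get_eq_getElem]
    rw [List.getElem_append_left hL0']
    have := hRoot hL0'
    simpa using this
  · intro i hi h2
    have hlen : (L ++ [a]).length = L.length + 1 := by simp
    rcases Nat.lt_or_ge (2 * i) L.length with hlt | hge
    · have hmv := hMove i hi hlt
      have ht : (L ++ [a]).take (2 * i) = L.take (2 * i) :=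
        List.take_append_of_le_length (by omega)
      have e1 : (L ++ [a]).get ⟨2 * i - 1, by simp; omega⟩ = L.get ⟨2 * i - 1, by omega⟩ := by
        simp only [List.get_eq_getElem]
        exact List.getElem_append_left (by omega)
      have e2 : (L ++ [a]).get ⟨2 * i, by simp; omega⟩ = L.get ⟨2 * i, hlt⟩ := by
        simp only [List.get_eq_getElem]
        exact List.getElem_append_left hlt
      exact aliceMoveOK_congr G T ht.symm e1.symm e2.symm hmv
    · have heq : 2 * i = L.length := by omega
      have ht : (L ++ [a]).take (2 * i) = L := by
        rw [List.take_append_of_le_length (by omega), heq, List.take_length]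
      have e1 : (L ++ [a]).get ⟨2 * i - 1, by simp; omega⟩ = L.getLast hL0 := by
        simp only [List.get_eq_getElem]
        rw [List.getElem_append_left (by omega)]
        rw [List.getLast_eq_getElem]
        congr 1
        omega
      have e2 : (L ++ [a]).get ⟨2 * i, h2⟩ = a := by
        have h' : L.length < (L ++ [a]).length := by simp
        have hee : (L ++ [a]).get ⟨2 * i, h2⟩ = (L ++ [a]).get ⟨L.length, h'⟩ := by
          congr 1
          exact Fin.ext heq
        rw [hee]
        simp
      exact aliceMoveOK_congr G T ht.symm e1.symm e2.symm hok

lemma score_le (G : SimpleGraph V) [DecidableRel G.Adj] (T : RTree V) (k : ℕ)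
    (hk : 3 ≤ k) (hheight : T.HeightLE k) (hG : G ≤ T.closure)
    (S : List V) (hF : FollowsStrategy G T S.reverse) :
    markScore G S.reverse ≤ 2 * k - 3 := by
  unfold markScore
  apply Finset.sup_le
  intro v _
  have hb : backDegree G S.reverse v ≤ 2 * k - 4 := by
    unfold backDegree
    have hpre : (S.reverse.takeWhile fun u => decide (u ≠ v)) <+: S.reverse :=
      List.takeWhile_prefix _
    have hF' := follows_prefix G T hpre hF
    have hnv : v ∉ S.reverse.takeWhile fun u => decide (u ≠ v) := by
      intro hm
      have := List.mem_takeWhile_imp hm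
      simp at this
    exact part1_bound G T k hk hheight hG _ hF' v hnv
  omega

lemma aliceWins_aux (G : SimpleGraph V) [DecidableRel G.Adj] (T : RTree V) (k : ℕ)
    (hk : 3 ≤ k) (hheight : T.HeightLE k) (hconn : G.Connected) (hG : G ≤ T.closure) :
    ∀ m : ℕ, ∀ S : List V, Fintype.card V - S.length ≤ m →
      FollowsStrategy G T S.reverse → AliceWinsFrom G (2 * k - 3) S := by
  intro m
  induction m with
  | zero =>
    intro S hm hF
    rw [AliceWinsFrom, dif_neg (by omega)]
    exact score_le G T k hk hheight hG S hF
  | succ m ih =>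
    intro S hm hF
    rw [AliceWinsFrom]
    by_cases hlen : S.length < Fintype.card V
    · rw [dif_pos hlen]
      by_cases hev : Even S.length
      · rw [if_pos hev]
        by_cases hS0 : S = []
        · subst hS0
          refine ⟨T.root, ⟨List.not_mem_nil, Or.inl rfl⟩, ?_⟩
          apply ih
          · simp only [List.length_cons, List.length_nil] at *
            omega
          · refine ⟨List.nodup_singleton _, fun h => rfl, ?_⟩
            intro i hi h
            simp at h
            omega
        · have hL0 : S.reverse ≠ [] := by simpa using hS0
          have hlenr : S.reverse.length = S.length := List.length_reverse
          have hav : ∃ u, Available G S.reverse u :=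
            exists_avail G hconn S.reverse hL0 (by omega) hF.1
          obtain ⟨a, hok⟩ := alice_choice G T S.reverse (S.reverse.getLast hL0) hav
          have haA : Available G S.reverse a := by
            rcases hok with ⟨-, h, -⟩ | ⟨-, h, -⟩ <;> exact h
          refine ⟨a, ⟨?_, Or.inr ?_⟩, ?_⟩
          · intro hmem
            exact haA.1 (List.mem_reverse.mpr hmem)
          · obtain ⟨w, hw, hadj⟩ := haA.2
            exact ⟨w, List.mem_reverse.mp hw, hadj⟩
          · apply ih
            · simp; omega
            · rw [List.reverse_cons]
              exact follows_append_alice G T hF (by rw [hlenr]; exact hev) hL0 hok haA.1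
      · rw [if_neg hev]
        intro v hlegal
        apply ih
        · simp; omega
        · rw [List.reverse_cons]
          apply follows_append_bob G T hF
          · rw [List.length_reverse]
            exact Nat.not_even_iff_odd.mp hev
          · intro h
            exact hlegal.1 (List.mem_reverse.mp h)
    · rw [dif_neg hlen]
      exact score_le G T k hk hheight hG S hF

end Part2


open Classical in
/-- Let `k ≥ 3` and let `G` be a connected graph of treedepth `k`,
witnessed by a rooted tree `T` of height `k` whose closure contains `G`.  Under Alice's
ancestor-marking strategy, every unmarked vertex has at most `2k - 4` marked neighbours at
every point of the game; consequently the connected game coloring number of `G` is at most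
`2k - 3`. -/
theorem connGameColNumber_le_of_treedepth
    {V : Type} [Fintype V] [DecidableEq V]
    (G : SimpleGraph V) [DecidableRel G.Adj] (T : RTree V) (k : ℕ) (hk : 3 ≤ k)
    (hheight : T.HeightLE k) (hconn : G.Connected) (hG : G ≤ T.closure) :
    (∀ L : List V, FollowsStrategy G T L →
      ∀ v : V, v ∉ L → (L.countP fun u => decide (G.Adj v u)) ≤ 2 * k - 4) ∧
    connGameColNumber G ≤ 2 * k - 3 := by
  refine ⟨part1_bound G T k hk hheight hG, ?_⟩
  have h0 : FollowsStrategy G T ([] : List V).reverse := by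
    refine ⟨List.nodup_nil, ?_, ?_⟩
    · intro h; simp at h
    · intro i hi h; simp at h
  have hw := aliceWins_aux G T k hk hheight hconn hG (Fintype.card V) [] (by simp) h0
  exact Nat.sInf_le hw
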